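/- For two i.i.d. items with values from F × F, and any deterministic menu (a,b,c) with a < b ≤ c ≤ a+b and c > 2a: if 2a · Pr[a ≤ v < c−a] ≥ (c−2a) · Pr[v ≥ c−a] (where v ~ F), then Rev(b,b,c) + Rev(a,a,2a) ≥ 2·Rev(a,b,c); so one of the symmetric menus (b,b,c), (a,a,2a) has revenue at least Rev(a,b,c). -/
import Mathlib


open MeasureTheory

/-- Payment made by a utility-maximizing additive buyer with values `(v1, v2)` facing the
deterministic menu charging `a` for item 1, `b` for item 2, `c` for the pair;
ties are broken in favor of the higher payment. -/
noncomputable def pay (a b c v1 v2 : ℝ) : ℝ :=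
  let u1 := v1 - a
  let u2 := v2 - b
  let u12 := v1 + v2 - c
  let m := max (max 0 u1) (max u2 u12)
  max (if u1 = m then a else 0) (max (if u2 = m then b else 0) (if u12 = m then c else 0))

/-- Expected revenue of the menu `(a, b, c)` when values are drawn from `μ`. -/
noncomputable def rev (μ : Measure (ℝ × ℝ)) (a b c : ℝ) : ℝ :=
  ∫ v, pay a b c v.1 v.2 ∂μ

lemma pay_eq_c {a b c v1 v2 : ℝ} (h0 : 0 ≤ c) (hac : a ≤ c) (hbc : b ≤ c)
    (h1 : v1 - a ≤ v1 + v2 - c) (h2 : v2 - b ≤ v1 + v2 - c) (h3 : 0 ≤ v1 + v2 - c) :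
    pay a b c v1 v2 = c := by
  have hmax : ∀ x y : ℝ, x ≤ c → y ≤ c → max x (max y c) = c := fun x y hx hy => by
    rw [max_eq_right hy, max_eq_right hx]
  have hm : max (max 0 (v1 - a)) (max (v2 - b) (v1 + v2 - c)) = v1 + v2 - c := by
    rw [max_eq_right h2, max_eq_right (max_le h3 h1)]
  simp only [pay]
  rw [hm, if_pos rfl]
  split_ifs <;> apply hmax <;> linarith

lemma pay_eq_b {a b c v1 v2 : ℝ} (hb : 0 ≤ b) (hab : a ≤ b)
    (h0 : 0 ≤ v2 - b) (h1 : v1 - a ≤ v2 - b) (h2 : v1 + v2 - c < v2 - b) :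
    pay a b c v1 v2 = b := by
  have hm : max (max 0 (v1 - a)) (max (v2 - b) (v1 + v2 - c)) = v2 - b := by
    rw [max_eq_left h2.le, max_eq_right (max_le h0 h1)]
  simp only [pay]
  rw [hm, if_pos rfl, if_neg (ne_of_lt h2)]
  rw [max_eq_left hb]
  split_ifs <;> rw [max_eq_right (by linarith)]

lemma pay_eq_a {a b c v1 v2 : ℝ} (ha : 0 ≤ a)
    (h0 : 0 ≤ v1 - a) (h1 : v2 - b < v1 - a) (h2 : v1 + v2 - c < v1 - a) :
    pay a b c v1 v2 = a := by
  have hm : max (max 0 (v1 - a)) (max (v2 - b) (v1 + v2 - c)) = v1 - a := by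
    rw [max_eq_right h0, max_eq_left (max_le h1.le h2.le)]
  simp only [pay]
  rw [hm, if_pos rfl, if_neg (ne_of_lt h1), if_neg (ne_of_lt h2)]
  rw [max_self, max_eq_left ha]

lemma pay_eq_0 {a b c v1 v2 : ℝ}
    (h1 : v1 - a < 0) (h2 : v2 - b < 0) (h3 : v1 + v2 - c < 0) :
    pay a b c v1 v2 = 0 := by
  have hm : max (max 0 (v1 - a)) (max (v2 - b) (v1 + v2 - c)) = 0 := by
    rw [max_eq_left h1.le, max_eq_left (max_le h2.le h3.le)]
  simp only [pay]
  rw [hm, if_neg (ne_of_lt h1), if_neg (ne_of_lt h2), if_neg (ne_of_lt h3)]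
  simp

lemma P_formula {a b c : ℝ} (ha : 0 ≤ a) (hab : a ≤ b) (hbc : b ≤ c) (hsub : c ≤ a + b)
    (v1 v2 : ℝ) :
    pay a b c v1 v2 =
      if c - a ≤ v2 then
        if a ≤ v1 then c
        else if c - b ≤ v1 ∧ c ≤ v1 + v2 then c
        else if b ≤ v2 then b else 0
      else if a ≤ v1 then a else 0 := by
  rcases le_or_gt (c - a) v2 with h2 | h2
  · rw [if_pos h2]
    rcases le_or_gt a v1 with h1 | h1
    · rw [if_pos h1]
      exact pay_eq_c (by linarith) (by linarith) (by linarith) (by linarith) (by linarith)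
        (by linarith)
    · rw [if_neg (not_le.mpr h1)]
      by_cases hs : c - b ≤ v1 ∧ c ≤ v1 + v2
      · rw [if_pos hs]
        exact pay_eq_c (by linarith) (by linarith) (by linarith) (by linarith)
          (by linarith [hs.1]) (by linarith [hs.2])
      · rw [if_neg hs]
        rcases le_or_gt b v2 with h3 | h3
        · rw [if_pos h3]
          have hkey : v1 + v2 - c < v2 - b := by
            rcases le_or_gt (c - b) v1 with h | h
            · have h' := lt_of_not_ge (fun hc => hs ⟨h, hc⟩)
              linarith
            · linarith
          exact pay_eq_b (by linarith) hab (by linarith) (by linarith) hkey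
        · rw [if_neg (not_le.mpr h3)]
          have hkey : v1 + v2 - c < 0 := by
            rcases le_or_gt (c - b) v1 with h | h
            · have h' := lt_of_not_ge (fun hc => hs ⟨h, hc⟩)
              linarith
            · linarith
          exact pay_eq_0 (by linarith) (by linarith) hkey
  · rw [if_neg (not_le.mpr h2)]
    rcases le_or_gt a v1 with h1 | h1
    · rw [if_pos h1]
      exact pay_eq_a ha (by linarith) (by linarith) (by linarith)
    · rw [if_neg (not_le.mpr h1)]
      exact pay_eq_0 (by linarith) (by linarith) (by linarith)

lemma Q_formula {b c : ℝ} (hb : 0 ≤ b) (hbc : b ≤ c) (h2b : c ≤ b + b) (v1 v2 : ℝ) :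
    pay b b c v1 v2 =
      if c - b ≤ v1 ∧ c - b ≤ v2 ∧ c ≤ v1 + v2 then c
      else if b ≤ v1 ∨ b ≤ v2 then b else 0 := by
  by_cases hB : c - b ≤ v1 ∧ c - b ≤ v2 ∧ c ≤ v1 + v2
  · rw [if_pos hB]
    exact pay_eq_c (by linarith) (by linarith) (by linarith) (by linarith [hB.2.1])
      (by linarith [hB.1]) (by linarith [hB.2.2])
  · rw [if_neg hB]
    rcases le_or_gt b v1 with h1 | h1
    · rw [if_pos (Or.inl h1)]
      have hv2 : v2 < c - b := by
        by_contra h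
        push_neg at h
        exact hB ⟨by linarith, h, by linarith⟩
      exact pay_eq_a hb (by linarith) (by linarith) (by linarith)
    · rcases le_or_gt b v2 with h2 | h2
      · rw [if_pos (Or.inr h2)]
        have hv1 : v1 < c - b := by
          by_contra h
          push_neg at h
          exact hB ⟨h, by linarith, by linarith⟩
        exact pay_eq_b hb le_rfl (by linarith) (by linarith) (by linarith)
      · rw [if_neg (by push_neg; exact ⟨not_le.mpr h1 |> not_le.mp |> fun _ => h1, h2⟩)]
        have hsum : v1 + v2 < c := by
          by_contra h
          push_neg at h
          exact hB ⟨by linarith, by linarith, h⟩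
        exact pay_eq_0 (by linarith) (by linarith) (by linarith)

lemma A_formula {a : ℝ} (ha : 0 ≤ a) (v1 v2 : ℝ) :
    pay a a (2 * a) v1 v2 = (if a ≤ v1 then a else 0) + (if a ≤ v2 then a else 0) := by
  rcases le_or_gt a v1 with h1 | h1 <;> rcases le_or_gt a v2 with h2 | h2
  · rw [if_pos h1, if_pos h2,
      pay_eq_c (by linarith) (by linarith) (by linarith) (by linarith) (by linarith)
        (by linarith)]
    ring
  · rw [if_pos h1, if_neg (not_le.mpr h2),
      pay_eq_a ha (by linarith) (by linarith) (by linarith)]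
    ring
  · rw [if_neg (not_le.mpr h1), if_pos h2,
      pay_eq_b ha le_rfl (by linarith) (by linarith) (by linarith)]
    ring
  · rw [if_neg (not_le.mpr h1), if_neg (not_le.mpr h2),
      pay_eq_0 (by linarith) (by linarith) (by linarith)]
    ring

lemma key_pointwise {a b c : ℝ} (ha : 0 ≤ a) (hab : a < b) (hbc : b ≤ c) (hsub : c ≤ a + b)
    (h2a : 2 * a < c) {v1 v2 : ℝ} (hv1 : 0 ≤ v1) (hv2 : 0 ≤ v2) :
    pay a b c v1 v2 + pay a b c v2 v1
      + a * ((Set.Ico a (c - a)).indicator 1 v1 * (Set.Ici (c - a)).indicator 1 v2)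
      + a * ((Set.Ici (c - a)).indicator 1 v1 * (Set.Ico a (c - a)).indicator 1 v2)
    ≤ pay b b c v1 v2 + pay a a (2 * a) v1 v2
      + (c - 2 * a) * ((Set.Ici (c - a)).indicator 1 v1 * (Set.Ici (c - a)).indicator 1 v2) := by
  rw [P_formula ha hab.le hbc hsub v1 v2, P_formula ha hab.le hbc hsub v2 v1,
    Q_formula (by linarith) hbc (by linarith) v1 v2, A_formula ha v1 v2]
  simp only [Set.indicator_apply, Set.mem_Ico, Set.mem_Ici, Pi.one_apply]
  rcases lt_or_ge v1 a with H1 | H1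
  · -- v1 ∈ L
    have f1 : ¬ a ≤ v1 := not_le.mpr H1
    have f2 : ¬ c - a ≤ v1 := by intro h; linarith
    have f2' : ¬ c ≤ v1 + a := by intro h; linarith
    have f3 : ¬ b ≤ v1 := by intro h; linarith
    rcases lt_or_ge v2 a with H2 | H2
    · -- (L,L)
      have g1 : ¬ a ≤ v2 := not_le.mpr H2
      have g2 : ¬ c - a ≤ v2 := by intro h; linarith
      have g2' : ¬ c ≤ v2 + a := by intro h; linarith
      have g3 : ¬ b ≤ v2 := by intro h; linarith
      have s1 : ¬ c ≤ v1 + v2 := by intro h; linarith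
      have s2 : ¬ c ≤ v2 + v1 := by intro h; linarith
      simp [f1, f2, f2', f3, g1, g2, g2', g3, s1, s2]
    · rcases lt_or_ge v2 (c - a) with H2' | H2'
      · -- (L,M)
        have g1 : a ≤ v2 := H2
        have g2 : ¬ c - a ≤ v2 := not_le.mpr H2'
        have g2' : ¬ c ≤ v2 + a := by intro h; linarith
        have g3 : ¬ b ≤ v2 := by intro h; linarith
        have g4 : c ≤ v2 + b := by linarith
        have g5 : v2 + a < c := by linarith
        have s1 : ¬ c ≤ v1 + v2 := by intro h; linarith
        have s2 : ¬ c ≤ v2 + v1 := by intro h; linarith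
        simp [f1, f2, f2', f3, g1, g2, g2', g3, g4, g5, s1, s2, H2']
      · -- (L,H)
        have g1 : a ≤ v2 := by linarith
        have g2 : c - a ≤ v2 := H2'
        have g2' : c ≤ v2 + a := by linarith
        have g3 : ¬ v2 < c - a := not_lt.mpr H2'
        have g3' : ¬ v2 + a < c := by intro h; linarith
        have g4 : c ≤ v2 + b := by linarith
        rcases le_or_gt c (v1 + v2) with hs | hs
        · have hs1 : c ≤ v1 + v2 := hs
          have hs2 : c ≤ v2 + v1 := by linarith
          simp [f1, f2, f2', f3, g1, g2, g2', g3, g3', g4, hs1, hs2]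
          all_goals first | (split_ifs <;> linarith) | linarith
        · have hs1 : ¬ c ≤ v1 + v2 := not_le.mpr hs
          have hs2 : ¬ c ≤ v2 + v1 := by intro h; linarith
          simp [f1, f2, f2', f3, g1, g2, g2', g3, g3', g4, hs1, hs2]
          all_goals first | (split_ifs <;> linarith) | linarith
  · rcases lt_or_ge v1 (c - a) with H1' | H1'
    · -- v1 ∈ M
      have f1 : a ≤ v1 := H1
      have f2 : ¬ c - a ≤ v1 := not_le.mpr H1'
      have f2' : ¬ c ≤ v1 + a := by intro h; linarith
      have f3 : ¬ b ≤ v1 := by intro h; linarith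
      have f4 : c ≤ v1 + b := by linarith
      have f5 : v1 + a < c := by linarith
      rcases lt_or_ge v2 a with H2 | H2
      · -- (M,L)
        have g1 : ¬ a ≤ v2 := not_le.mpr H2
        have g2 : ¬ c - a ≤ v2 := by intro h; linarith
        have g2' : ¬ c ≤ v2 + a := by intro h; linarith
        have g3 : ¬ b ≤ v2 := by intro h; linarith
        have s1 : ¬ c ≤ v1 + v2 := by intro h; linarith
        have s2 : ¬ c ≤ v2 + v1 := by intro h; linarith
        simp [f1, f2, f2', f3, f4, f5, g1, g2, g2', g3, s1, s2]
      · rcases lt_or_ge v2 (c - a) with H2' | H2'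
        · -- (M,M)
          have g1 : a ≤ v2 := H2
          have g2 : ¬ c - a ≤ v2 := not_le.mpr H2'
          have g2' : ¬ c ≤ v2 + a := by intro h; linarith
          have g3 : ¬ b ≤ v2 := by intro h; linarith
          have g4 : c ≤ v2 + b := by linarith
          have g5 : v2 + a < c := by linarith
          simp [f1, f2, f2', f3, f4, f5, g1, g2, g2', g3, g4, g5, H2']
          all_goals first | (split_ifs <;> linarith) | linarith
        · -- (M,H)
          have g1 : a ≤ v2 := by linarith
          have g2 : c - a ≤ v2 := H2'
          have g2' : c ≤ v2 + a := by linarith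
          have g3 : ¬ v2 < c - a := not_lt.mpr H2'
          have g3' : ¬ v2 + a < c := by intro h; linarith
          have g4 : c ≤ v2 + b := by linarith
          have s1 : c ≤ v1 + v2 := by linarith
          have s2 : c ≤ v2 + v1 := by linarith
          simp [f1, f2, f2', f3, f4, f5, g1, g2, g2', g3, g3', g4, s1, s2, H1']
          all_goals first | (split_ifs <;> linarith) | linarith
    · -- v1 ∈ H
      have f1 : a ≤ v1 := by linarith
      have f2 : c - a ≤ v1 := H1'
      have f2' : c ≤ v1 + a := by linarith
      have f3 : ¬ v1 < c - a := not_lt.mpr H1'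
      have f3' : ¬ v1 + a < c := by intro h; linarith
      have f4 : c ≤ v1 + b := by linarith
      rcases lt_or_ge v2 a with H2 | H2
      · -- (H,L)
        have g1 : ¬ a ≤ v2 := not_le.mpr H2
        have g2 : ¬ c - a ≤ v2 := by intro h; linarith
        have g2' : ¬ c ≤ v2 + a := by intro h; linarith
        have g3 : ¬ b ≤ v2 := by intro h; linarith
        rcases le_or_gt c (v1 + v2) with hs | hs
        · have hs1 : c ≤ v1 + v2 := hs
          have hs2 : c ≤ v2 + v1 := by linarith
          simp [f1, f2, f2', f3, f3', f4, g1, g2, g2', g3, hs1, hs2]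
          all_goals first | (split_ifs <;> linarith) | linarith
        · have hs1 : ¬ c ≤ v1 + v2 := not_le.mpr hs
          have hs2 : ¬ c ≤ v2 + v1 := by intro h; linarith
          simp [f1, f2, f2', f3, f3', f4, g1, g2, g2', g3, hs1, hs2]
          all_goals first | (split_ifs <;> linarith) | linarith
      · rcases lt_or_ge v2 (c - a) with H2' | H2'
        · -- (H,M)
          have g1 : a ≤ v2 := H2
          have g2 : ¬ c - a ≤ v2 := not_le.mpr H2'
          have g2' : ¬ c ≤ v2 + a := by intro h; linarith
          have g3 : ¬ b ≤ v2 := by intro h; linarith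
          have g4 : c ≤ v2 + b := by linarith
          have g5 : v2 + a < c := by linarith
          have s1 : c ≤ v1 + v2 := by linarith
          have s2 : c ≤ v2 + v1 := by linarith
          simp [f1, f2, f2', f3, f3', f4, g1, g2, g2', g3, g4, g5, s1, s2, H2']
          all_goals first | (split_ifs <;> linarith) | linarith
        · -- (H,H)
          have g1 : a ≤ v2 := by linarith
          have g2 : c - a ≤ v2 := H2'
          have g2' : c ≤ v2 + a := by linarith
          have g3 : ¬ v2 < c - a := not_lt.mpr H2'
          have g3' : ¬ v2 + a < c := by intro h; linarith
          have g4 : c ≤ v2 + b := by linarith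
          have s1 : c ≤ v1 + v2 := by linarith
          have s2 : c ≤ v2 + v1 := by linarith
          simp [f1, f2, f2', f3, f3', f4, g1, g2, g2', g3, g3', g4, s1, s2]
          all_goals first | (split_ifs <;> linarith) | linarith

lemma measurable_pay (a b c : ℝ) : Measurable fun v : ℝ × ℝ => pay a b c v.1 v.2 := by
  simp only [pay]
  have h1 : Measurable fun v : ℝ × ℝ => v.1 - a := by fun_prop
  have h2 : Measurable fun v : ℝ × ℝ => v.2 - b := by fun_prop
  have h12 : Measurable fun v : ℝ × ℝ => v.1 + v.2 - c := by fun_prop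
  have hm : Measurable fun v : ℝ × ℝ =>
      max (max 0 (v.1 - a)) (max (v.2 - b) (v.1 + v.2 - c)) := by fun_prop
  exact (Measurable.ite (measurableSet_eq_fun h1 hm) measurable_const measurable_const).max
    ((Measurable.ite (measurableSet_eq_fun h2 hm) measurable_const measurable_const).max
      (Measurable.ite (measurableSet_eq_fun h12 hm) measurable_const measurable_const))

lemma pay_nonneg {a b c : ℝ} (ha : 0 ≤ a) (hb : 0 ≤ b) (hc : 0 ≤ c) (v1 v2 : ℝ) :
    0 ≤ pay a b c v1 v2 := by
  simp only [pay]
  split_ifs <;> exact le_max_of_le_left (by linarith)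

lemma pay_le {a b c : ℝ} (ha : 0 ≤ a) (hab : a ≤ b) (hbc : b ≤ c) (v1 v2 : ℝ) :
    pay a b c v1 v2 ≤ c := by
  simp only [pay]
  split_ifs <;> exact max_le (by linarith) (max_le (by linarith) (by linarith))

lemma pay_le' {a c : ℝ} (ha : 0 ≤ a) (v1 v2 : ℝ) : pay a a (2 * a) v1 v2 ≤ 2 * a := by
  simp only [pay]
  split_ifs <;> exact max_le (by linarith) (max_le (by linarith) (by linarith))

lemma integrable_pay {a b c : ℝ} (ha : 0 ≤ a) (hab : a ≤ b) (hbc : b ≤ c)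
    (μ : Measure (ℝ × ℝ)) [IsFiniteMeasure μ] :
    Integrable (fun v : ℝ × ℝ => pay a b c v.1 v.2) μ := by
  refine Integrable.mono' (integrable_const c) (measurable_pay a b c).aestronglyMeasurable ?_
  filter_upwards with v
  rw [Real.norm_eq_abs, abs_le]
  exact ⟨by linarith [pay_nonneg ha (ha.trans hab) (ha.trans (hab.trans hbc)) v.1 v.2],
    pay_le ha hab hbc v.1 v.2⟩

theorem stmt10 (μ : Measure ℝ) [IsProbabilityMeasure μ] (hsupp : μ (Set.Iio 0) = 0)
    (a b c : ℝ) (ha : 0 ≤ a) (hab : a < b) (hbc : b ≤ c) (hsub : c ≤ a + b)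
    (h2a : 2 * a < c)
    (hcond : (c - 2 * a) * (μ (Set.Ici (c - a))).toReal ≤
      2 * a * (μ (Set.Ico a (c - a))).toReal) :
    2 * rev (μ.prod μ) a b c ≤ rev (μ.prod μ) b b c + rev (μ.prod μ) a a (2 * a) ∧
    (rev (μ.prod μ) a b c ≤ rev (μ.prod μ) b b c ∨
      rev (μ.prod μ) a b c ≤ rev (μ.prod μ) a a (2 * a)) := by
  have main : 2 * rev (μ.prod μ) a b c ≤ rev (μ.prod μ) b b c + rev (μ.prod μ) a a (2 * a) := by
    set P := μ.prod μ with hP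
    have hPfin : IsProbabilityMeasure P := by rw [hP]; infer_instance
    -- indicator functions
    set χM : ℝ → ℝ := (Set.Ico a (c - a)).indicator 1 with hχM
    set χH : ℝ → ℝ := (Set.Ici (c - a)).indicator 1 with hχH
    have hχM_meas : Measurable χM := measurable_const.indicator measurableSet_Ico
    have hχH_meas : Measurable χH := measurable_const.indicator measurableSet_Ici
    have hχM_bdd : ∀ x, 0 ≤ χM x ∧ χM x ≤ 1 := by
      intro x
      rw [hχM, Set.indicator_apply]
      split_ifs <;> norm_num
    have hχH_bdd : ∀ x, 0 ≤ χH x ∧ χH x ≤ 1 := by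
      intro x
      rw [hχH, Set.indicator_apply]
      split_ifs <;> norm_num
    -- integrability of all pieces
    have hF : Integrable (fun v : ℝ × ℝ => pay a b c v.1 v.2) P :=
      integrable_pay ha hab.le hbc P
    have hF' : Integrable (fun v : ℝ × ℝ => pay a b c v.2 v.1) P := by
      have h1 : Integrable (fun v : ℝ × ℝ => pay a b c v.1 v.2) ((μ.prod μ).map Prod.swap) := by
        rw [Measure.prod_swap]
        exact integrable_pay ha hab.le hbc (μ.prod μ)
      exact h1.comp_measurable measurable_swap
    have hG : Integrable (fun v : ℝ × ℝ => pay b b c v.1 v.2) P :=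
      integrable_pay (by linarith) le_rfl hbc P
    have hA : Integrable (fun v : ℝ × ℝ => pay a a (2 * a) v.1 v.2) P :=
      integrable_pay ha le_rfl (by linarith) P
    have hprod : ∀ (f g : ℝ → ℝ), Measurable f → Measurable g → (∀ x, 0 ≤ f x ∧ f x ≤ 1) →
        (∀ x, 0 ≤ g x ∧ g x ≤ 1) → ∀ r : ℝ,
        Integrable (fun v : ℝ × ℝ => r * (f v.1 * g v.2)) P := by
      intro f g hf hg hfb hgb r
      refine Integrable.mono' (integrable_const |r|)
        (((hf.comp measurable_fst).mul (hg.comp measurable_snd)).const_mul r).aestronglyMeasurable ?_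
      filter_upwards with v
      rw [Real.norm_eq_abs, abs_mul]
      have h1 := hfb v.1
      have h2 := hgb v.2
      have : |f v.1 * g v.2| ≤ 1 := by
        rw [abs_mul]
        nlinarith [abs_of_nonneg h1.1, abs_of_nonneg h2.1]
      nlinarith [abs_nonneg r]
    have hE1 : Integrable (fun v : ℝ × ℝ => a * (χM v.1 * χH v.2)) P :=
      hprod χM χH hχM_meas hχH_meas hχM_bdd hχH_bdd a
    have hE2 : Integrable (fun v : ℝ × ℝ => a * (χH v.1 * χM v.2)) P :=
      hprod χH χM hχH_meas hχM_meas hχH_bdd hχM_bdd a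
    have hE3 : Integrable (fun v : ℝ × ℝ => (c - 2 * a) * (χH v.1 * χH v.2)) P :=
      hprod χH χH hχH_meas hχH_meas hχH_bdd hχH_bdd (c - 2 * a)
    -- almost-everywhere nonnegativity
    have hae : ∀ᵐ v ∂P, 0 ≤ v.1 ∧ 0 ≤ v.2 := by
      have hA1 : P (Set.Iio 0 ×ˢ (Set.univ : Set ℝ)) = 0 := by
        rw [hP, Measure.prod_prod, hsupp, zero_mul]
      have hB1 : P ((Set.univ : Set ℝ) ×ˢ Set.Iio 0) = 0 := by
        rw [hP, Measure.prod_prod, hsupp, mul_zero]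
      rw [ae_iff]
      refine measure_mono_null (fun v hv => ?_) (measure_union_null hA1 hB1)
      simp only [Set.mem_setOf_eq, not_and_or, not_le] at hv
      rcases hv with h | h
      · exact Or.inl ⟨h, Set.mem_univ _⟩
      · exact Or.inr ⟨Set.mem_univ _, h⟩
    -- the integral inequality
    have hFG : Integrable (fun v : ℝ × ℝ => pay a b c v.1 v.2 + pay a b c v.2 v.1) P :=
      hF.add hF'
    have hFGE1 : Integrable (fun v : ℝ × ℝ => pay a b c v.1 v.2 + pay a b c v.2 v.1
        + a * (χM v.1 * χH v.2)) P := hFG.add hE1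
    have hLHS : Integrable (fun v : ℝ × ℝ => pay a b c v.1 v.2 + pay a b c v.2 v.1
        + a * (χM v.1 * χH v.2) + a * (χH v.1 * χM v.2)) P := hFGE1.add hE2
    have hGA : Integrable (fun v : ℝ × ℝ => pay b b c v.1 v.2 + pay a a (2 * a) v.1 v.2) P :=
      hG.add hA
    have hRHS : Integrable (fun v : ℝ × ℝ => pay b b c v.1 v.2 + pay a a (2 * a) v.1 v.2
        + (c - 2 * a) * (χH v.1 * χH v.2)) P := hGA.add hE3
    have hmono :
        ∫ v, (pay a b c v.1 v.2 + pay a b c v.2 v.1 + a * (χM v.1 * χH v.2)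
          + a * (χH v.1 * χM v.2)) ∂P
        ≤ ∫ v, (pay b b c v.1 v.2 + pay a a (2 * a) v.1 v.2
          + (c - 2 * a) * (χH v.1 * χH v.2)) ∂P := by
      refine integral_mono_ae hLHS hRHS ?_
      filter_upwards [hae] with v hv
      exact key_pointwise ha hab hbc hsub h2a hv.1 hv.2
    -- compute both sides
    rw [integral_add hFGE1 hE2, integral_add hFG hE1,
      integral_add hF hF', integral_add hGA hE3, integral_add hG hA] at hmono
    -- swap
    have hswap : ∫ v, pay a b c v.2 v.1 ∂P = ∫ v, pay a b c v.1 v.2 ∂P := by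
      rw [hP]
      exact integral_prod_swap (fun v : ℝ × ℝ => pay a b c v.1 v.2)
    -- indicator integrals
    have hχM_int : ∫ x, χM x ∂μ = (μ (Set.Ico a (c - a))).toReal := by
      rw [hχM]
      exact integral_indicator_one measurableSet_Ico
    have hχH_int : ∫ x, χH x ∂μ = (μ (Set.Ici (c - a))).toReal := by
      rw [hχH]
      exact integral_indicator_one measurableSet_Ici
    have hE1_int : ∫ v, a * (χM v.1 * χH v.2) ∂P
        = a * ((μ (Set.Ico a (c - a))).toReal * (μ (Set.Ici (c - a))).toReal) := by
      rw [hP, integral_const_mul, integral_prod_mul, hχM_int, hχH_int]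
    have hE2_int : ∫ v, a * (χH v.1 * χM v.2) ∂P
        = a * ((μ (Set.Ici (c - a))).toReal * (μ (Set.Ico a (c - a))).toReal) := by
      rw [hP, integral_const_mul, integral_prod_mul, hχM_int, hχH_int]
    have hE3_int : ∫ v, (c - 2 * a) * (χH v.1 * χH v.2) ∂P
        = (c - 2 * a) * ((μ (Set.Ici (c - a))).toReal * (μ (Set.Ici (c - a))).toReal) := by
      rw [hP, integral_const_mul, integral_prod_mul, hχH_int]
    rw [hswap, hE1_int, hE2_int, hE3_int] at hmono
    have hrev1 : ∫ v, pay a b c v.1 v.2 ∂P = rev P a b c := rfl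
    have hrev2 : ∫ v, pay b b c v.1 v.2 ∂P = rev P b b c := rfl
    have hrev3 : ∫ v, pay a a (2 * a) v.1 v.2 ∂P = rev P a a (2 * a) := rfl
    rw [hrev1, hrev2, hrev3] at hmono
    have hJ : 0 ≤ (μ (Set.Ici (c - a))).toReal := ENNReal.toReal_nonneg
    nlinarith [mul_le_mul_of_nonneg_right hcond hJ]
  refine ⟨main, ?_⟩
  by_contra h
  push_neg at h
  linarith [h.1, h.2]
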